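/- Let n, r be positive integers with r dividing n and r ≤ n, and let δ ≥ 0. There exists a (2r, δ, 2r²δ)-error-correcting data structure of length N = r · 2^{n/r} for the Substring problem with parameter r: the encoding is the concatenation of the Hadamard codes of the r consecutive (n/r)-bit blocks of x, and each query y with |y| ≤ r is answered with at most 2|y| ≤ 2r probes (two Hadamard-decoding probes per 1-bit of y) with error probability at most 2r²δ. -/

import Mathlib

/-- Hamming weight of a bit string. -/
def wt {n : ℕ} (y : Fin n → Bool) : ℕ := (Finset.univ.filter (fun i => y i = true)).card

/-- Inner product mod 2 of two bit strings, as an element of `ZMod 2`. -/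
def ip {n : ℕ} (x y : Fin n → Bool) : ZMod 2 := ∑ i, if x i && y i then 1 else 0

/-- The sequence of answers obtained by the (adaptive) decoder probing the string `y`
on query `q` with seed `s`: the `k`-th probe position may depend on the query, the seed,
and the previous `k` answers. -/
def runAns {N p : ℕ} {Q S : Type} (probe : (k : Fin p) → Q → S → (Fin k.val → Bool) → Fin N)
    (y : Fin N → Bool) (q : Q) (s : S) : (k : Fin p) → Bool
  | k => y (probe k q s (fun j => runAns probe y q s ⟨j.val, j.isLt.trans k.isLt⟩))
  termination_by k => k.val

/-- A `(p,δ,ε)`-error-correcting data structure of length `N` for `f : D → Q → A`: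
an encoding `enc : D → {0,1}^N` together with a randomized decoder (seed set `Fin seeds`,
adaptive probe-choice functions, and an output function) such that for every query `q`,
every data item `x`, and every `y ∈ {0,1}^N` within Hamming distance `δN` of `enc x`,
the decoder outputs `f x q` with probability at least `1 - ε` over a uniform seed. -/
structure ECDS (D Q A : Type) [DecidableEq A] (p N : ℕ) (δ ε : ℝ) (f : D → Q → A) where
  enc : D → (Fin N → Bool)
  seeds : ℕ
  seeds_pos : 0 < seeds
  probe : (k : Fin p) → Q → Fin seeds → (Fin k.val → Bool) → Fin N
  out : Q → Fin seeds → (Fin p → Bool) → A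
  correct : ∀ (q : Q) (x : D) (y : Fin N → Bool),
    (hammingDist y (enc x) : ℝ) ≤ δ * N →
    (1 - ε) * (seeds : ℝ) ≤
      ((Finset.univ.filter (fun s : Fin seeds =>
        out q s (runAns probe y q s) = f x q)).card : ℝ)

/-- The substring `x_y`: the `|y|`-bit string consisting of the bits of `x` at the positions of
the 1-bits of `y`, in increasing order of position. -/
def substring' {n : ℕ} (x y : Fin n → Bool) : List Bool :=
  ((List.finRange n).filter (fun i => y i)).map x

/- Auxiliary material for the Hadamard substring ECDS -/

namespace SubstrHad

def bflip {m : ℕ} (t : Fin m) (z : Fin m → Bool) : Fin m → Bool :=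
  Function.update z t (!z t)

lemma bflip_inj {m : ℕ} (t : Fin m) : Function.Injective (bflip t) := by
  have h : ∀ z, bflip t (bflip t z) = z := by
    intro z; funext i
    by_cases h : i = t
    · subst h; simp [bflip]
    · simp [bflip, Function.update_of_ne h]
  exact Function.LeftInverse.injective (g := bflip t) h

def bv (m : ℕ) : (Fin m → Bool) ≃ Fin (2 ^ m) :=
  (Equiv.arrowCongr (Equiv.refl (Fin m)) finTwoEquiv.symm).trans finFunctionFinEquiv

def pos (m r : ℕ) (b : Fin r) (w : Fin (2 ^ m)) : Fin (r * 2 ^ m) :=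
  ⟨2 ^ m * b.val + w.val, by
    have hb := b.isLt; have hw := w.isLt
    calc 2 ^ m * b.val + w.val < 2 ^ m * b.val + 2 ^ m := by omega
      _ = 2 ^ m * (b.val + 1) := by ring
      _ ≤ 2 ^ m * r := Nat.mul_le_mul_left _ hb
      _ = r * 2 ^ m := Nat.mul_comm _ _⟩

lemma pos_val_div {m r : ℕ} (b : Fin r) (w : Fin (2 ^ m)) :
    (pos m r b w).val / 2 ^ m = b.val := by
  simp [pos, Nat.mul_add_div (Nat.two_pow_pos m), Nat.div_eq_of_lt w.isLt]

lemma pos_val_mod {m r : ℕ} (b : Fin r) (w : Fin (2 ^ m)) :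
    (pos m r b w).val % 2 ^ m = w.val := by
  simp [pos, Nat.mul_add_mod, Nat.mod_eq_of_lt w.isLt]

lemma pos_inj {m r : ℕ} (b : Fin r) : Function.Injective (pos m r b) := by
  intro w1 w2 h
  have h1 := congrArg Fin.val h
  simp [pos] at h1
  exact Fin.ext h1

def blockOf {n r m : ℕ} (hmn : n = r * m) (x : Fin n → Bool) (b : Fin r) (t : Fin m) : Bool :=
  x ⟨b.val * m + t.val, by
    calc b.val * m + t.val < b.val * m + m := Nat.add_lt_add_left t.isLt _
      _ = (b.val + 1) * m := by ring
      _ ≤ r * m := Nat.mul_le_mul_right m b.isLt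
      _ = n := hmn.symm⟩

def encAux {n r : ℕ} (m : ℕ) (hmn : n = r * m) (x : Fin n → Bool) (b : Fin r)
    (w : Fin (2 ^ m)) : Bool :=
  decide (ip (blockOf hmn x b) ((bv m).symm w) = 1)

def encF {n r : ℕ} (m : ℕ) (hmn : n = r * m) (x : Fin n → Bool) (p : Fin (r * 2 ^ m)) : Bool :=
  encAux m hmn x ⟨p.val / 2 ^ m, by
      rw [Nat.div_lt_iff_lt_mul (Nat.two_pow_pos m)]; exact p.isLt⟩
    ⟨p.val % 2 ^ m, Nat.mod_lt _ (Nat.two_pow_pos m)⟩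

lemma encF_pos {n r : ℕ} (m : ℕ) (hmn : n = r * m) (x : Fin n → Bool) (b : Fin r)
    (w : Fin (2 ^ m)) :
    encF m hmn x (pos m r b w) = encAux m hmn x b w := by
  unfold encF
  congr 1
  · exact Fin.ext (pos_val_div b w)
  · exact Fin.ext (pos_val_mod b w)

def qpos {n r : ℕ} (m : ℕ) (hm0 : 0 < m) (hmn : n = r * m) (i : Fin n) (par : Bool)
    (z : Fin m → Bool) : Fin (r * 2 ^ m) :=
  pos m r ⟨i.val / m, by rw [Nat.div_lt_iff_lt_mul hm0, ← hmn]; exact i.isLt⟩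
    ((bv m) (if par then bflip ⟨i.val % m, Nat.mod_lt _ hm0⟩ z else z))

lemma qpos_inj {n r : ℕ} (m : ℕ) (hm0 : 0 < m) (hmn : n = r * m) (i : Fin n) (par : Bool) :
    Function.Injective (qpos m hm0 hmn i par) := by
  intro z1 z2 h
  have h1 := pos_inj _ h
  have h2 := (bv m).injective h1
  cases par
  · simpa using h2
  · simpa using bflip_inj _ h2

lemma encF_qpos {n r : ℕ} (m : ℕ) (hm0 : 0 < m) (hmn : n = r * m) (x : Fin n → Bool)
    (i : Fin n) (par : Bool) (z : Fin m → Bool) :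
    encF m hmn x (qpos m hm0 hmn i par z) =
      decide (ip (blockOf hmn x
          ⟨i.val / m, by rw [Nat.div_lt_iff_lt_mul hm0, ← hmn]; exact i.isLt⟩)
        (if par then bflip ⟨i.val % m, Nat.mod_lt _ hm0⟩ z else z) = 1) := by
  rw [qpos, encF_pos, encAux, Equiv.symm_apply_apply]

lemma xor_decide' (a b : ZMod 2) :
    xor (decide (a = 1)) (decide (b = 1)) = decide (a + b = 1) := by
  revert a b; decide

lemma ip_bflip {m : ℕ} (u z : Fin m → Bool) (t : Fin m) :
    ip u z + ip u (bflip t z) = if u t then 1 else 0 := by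
  have hz : ∀ a : ZMod 2, a + a = 0 := by decide
  unfold ip
  rw [← Finset.sum_add_distrib, Finset.sum_eq_single t]
  · have h : bflip t z t = !z t := by simp [bflip]
    rw [h]
    cases hu : u t <;> cases hc : z t <;> simp
  · intro i _ hi
    have h : bflip t z i = z i := Function.update_of_ne hi _ _
    rw [h]
    cases (u i && z i) <;> simp [hz]
  · simp

lemma decode_qpos {n r : ℕ} (m : ℕ) (hm0 : 0 < m) (hmn : n = r * m) (x : Fin n → Bool)
    (i : Fin n) (z : Fin m → Bool) :
    xor (encF m hmn x (qpos m hm0 hmn i false z))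
      (encF m hmn x (qpos m hm0 hmn i true z)) = x i := by
  rw [encF_qpos, encF_qpos]
  simp only [if_true, if_false, Bool.false_eq_true]
  rw [xor_decide', ip_bflip]
  have hb : blockOf hmn x
      ⟨i.val / m, by rw [Nat.div_lt_iff_lt_mul hm0, ← hmn]; exact i.isLt⟩
      ⟨i.val % m, Nat.mod_lt _ hm0⟩ = x i := by
    unfold blockOf
    congr 1
    exact Fin.ext (by simpa [Nat.mul_comm] using Nat.div_add_mod i.val m)
  rw [hb]
  cases h : x i <;> simp

lemma length_L {n : ℕ} (y : Fin n → Bool) :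
    ((List.finRange n).filter (fun i => y i)).length = wt y := by
  unfold wt
  rw [Fin.univ_def, Finset.filter]
  simp [Multiset.filter_coe]

def probeF {n r : ℕ} (m : ℕ) (hm0 : 0 < m) (hmn : n = r * m) (hr : 0 < r)
    (k : Fin (2 * r)) (q : {y : Fin n → Bool // wt y ≤ r}) (s : Fin (2 ^ m))
    (_ : Fin k.val → Bool) : Fin (r * 2 ^ m) :=
  if h : k.val / 2 < ((List.finRange n).filter (fun i => q.val i)).length then
    qpos m hm0 hmn (((List.finRange n).filter (fun i => q.val i)).get ⟨k.val / 2, h⟩)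
      (decide (k.val % 2 = 1)) ((bv m).symm s)
  else ⟨0, Nat.mul_pos hr (Nat.two_pow_pos m)⟩

def outF {n r m : ℕ} (q : {y : Fin n → Bool // wt y ≤ r}) (_ : Fin (2 ^ m))
    (a : Fin (2 * r) → Bool) : List Bool :=
  (List.finRange ((List.finRange n).filter (fun i => q.val i)).length).map (fun j =>
    xor (a ⟨2 * j.val, by
          have h1 := length_L q.val; have h2 := q.2; have h3 := j.isLt; omega⟩)
        (a ⟨2 * j.val + 1, by
          have h1 := length_L q.val; have h2 := q.2; have h3 := j.isLt; omega⟩))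

lemma runAns_probeF {n r : ℕ} (m : ℕ) (hm0 : 0 < m) (hmn : n = r * m) (hr : 0 < r)
    (y : Fin (r * 2 ^ m) → Bool) (q : {y : Fin n → Bool // wt y ≤ r}) (s : Fin (2 ^ m))
    (k : Fin (2 * r)) :
    runAns (probeF m hm0 hmn hr) y q s k
      = y (probeF m hm0 hmn hr k q s (fun _ => false)) := by
  rw [runAns]
  rfl

lemma probeF_eq {n r : ℕ} (m : ℕ) (hm0 : 0 < m) (hmn : n = r * m) (hr : 0 < r)
    (q : {y : Fin n → Bool // wt y ≤ r}) (s : Fin (2 ^ m)) (k : Fin (2 * r))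
    (a : Fin k.val → Bool)
    (h : k.val / 2 < ((List.finRange n).filter (fun i => q.val i)).length) :
    probeF m hm0 hmn hr k q s a
      = qpos m hm0 hmn (((List.finRange n).filter (fun i => q.val i)).get ⟨k.val / 2, h⟩)
          (decide (k.val % 2 = 1)) ((bv m).symm s) := by
  unfold probeF
  rw [dif_pos h]

lemma outF_correct {n r : ℕ} (m : ℕ) (hm0 : 0 < m) (hmn : n = r * m) (hr : 0 < r)
    (q : {y : Fin n → Bool // wt y ≤ r}) (x : Fin n → Bool) (y : Fin (r * 2 ^ m) → Bool)
    (s : Fin (2 ^ m))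
    (hs : ∀ k : Fin (2 * r),
      k.val / 2 < ((List.finRange n).filter (fun i => q.val i)).length →
      y (probeF m hm0 hmn hr k q s (fun _ => false))
        = encF m hmn x (probeF m hm0 hmn hr k q s (fun _ => false))) :
    outF q s (runAns (probeF m hm0 hmn hr) y q s) = substring' x q.val := by
  have hwt : ((List.finRange n).filter (fun i => q.val i)).length ≤ r := by
    rw [length_L]; exact q.2
  have key : ∀ (kk : Fin (2 * r)) (par : Bool)
      (jj : Fin ((List.finRange n).filter (fun i => q.val i)).length),
      kk.val = 2 * jj.val + (if par then 1 else 0) →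
      runAns (probeF m hm0 hmn hr) y q s kk
        = encF m hmn x (qpos m hm0 hmn
            (((List.finRange n).filter (fun i => q.val i)).get jj) par ((bv m).symm s)) := by
    intro kk par jj hkk
    have hjj := jj.isLt
    have hcond : kk.val / 2 < ((List.finRange n).filter (fun i => q.val i)).length := by
      cases par <;> simp at hkk <;> omega
    rw [runAns_probeF, hs kk hcond, probeF_eq m hm0 hmn hr q s kk _ hcond]
    have h4 : (⟨kk.val / 2, hcond⟩ :
        Fin ((List.finRange n).filter (fun i => q.val i)).length) = jj := by
      apply Fin.ext
      show kk.val / 2 = jj.val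
      cases par <;> simp at hkk <;> omega
    have h5 : decide (kk.val % 2 = 1) = par := by
      clear h4
      cases par <;> simp at hkk ⊢ <;> omega
    rw [h4, h5]
  unfold outF substring'
  conv_rhs => rw [← List.map_getElem_finRange ((List.finRange n).filter (fun i => q.val i))]
  rw [List.map_map]
  apply List.map_congr_left
  intro j _
  have pf1 : 2 * j.val < 2 * r := by have := j.isLt; omega
  have pf2 : 2 * j.val + 1 < 2 * r := by have := j.isLt; omega
  rw [key ⟨2 * j.val, pf1⟩ false j (by simp),
      key ⟨2 * j.val + 1, pf2⟩ true j (by simp),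
      decode_qpos]
  rfl

end SubstrHad

/-- For `r ∣ n` and `δ ≥ 0` there is a `(2r, δ, 2r²δ)`-error-correcting data
structure of length `N = r·2^{n/r}` for the Substring problem with parameter `r`
(concatenation of the Hadamard codes of the `r` consecutive `(n/r)`-bit blocks of `x`,
answering each query `y` with at most `2|y| ≤ 2r` probes). -/
theorem substring_hadamard_ecds_exists (n r : ℕ) (hn : 0 < n) (hr : 0 < r) (hrn : r ≤ n)
    (hdvd : r ∣ n) (δ : ℝ) (hδ : 0 ≤ δ) :
    Nonempty (ECDS (Fin n → Bool) {y : Fin n → Bool // wt y ≤ r} (List Bool)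
      (2 * r) (r * 2 ^ (n / r)) δ (2 * (r : ℝ) ^ 2 * δ)
      (fun x q => substring' x q.val)) := by
  obtain ⟨m, rfl⟩ := hdvd
  have hm0 : 0 < m := by
    rcases Nat.eq_zero_or_pos m with h | h
    · subst h; simp at hn
    · exact h
  rw [Nat.mul_div_cancel_left m hr]
  have hmn : r * m = r * m := rfl
  refine ⟨⟨SubstrHad.encF m hmn, 2 ^ m, Nat.two_pow_pos _,
    SubstrHad.probeF m hm0 hmn hr, SubstrHad.outF, ?_⟩⟩
  intro q x y hy
  set L := (List.finRange (r * m)).filter (fun i => q.val i) with hLdef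
  have hlen : L.length ≤ r := by rw [hLdef, SubstrHad.length_L]; exact q.2
  set P : Fin (2 * r) → Fin (2 ^ m) → Fin (r * 2 ^ m) :=
    fun k s => SubstrHad.probeF m hm0 hmn hr k q s (fun _ => false) with hPdef
  set D := Finset.univ.filter
    (fun p : Fin (r * 2 ^ m) => y p ≠ SubstrHad.encF m hmn x p) with hDdef
  have hDcard : D.card = hammingDist y (SubstrHad.encF m hmn x) := rfl
  set G := Finset.univ.filter (fun s : Fin (2 ^ m) =>
    ∀ k : Fin (2 * r), k.val / 2 < L.length →
      y (P k s) = SubstrHad.encF m hmn x (P k s)) with hGdef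
  -- the good seeds give the right answer
  have hsub : G ⊆ Finset.univ.filter (fun s : Fin (2 ^ m) =>
      SubstrHad.outF q s (runAns (SubstrHad.probeF m hm0 hmn hr) y q s)
        = substring' x q.val) := by
    intro s hsmem
    rw [hGdef, Finset.mem_filter] at hsmem
    rw [Finset.mem_filter]
    exact ⟨Finset.mem_univ _, SubstrHad.outF_correct m hm0 hmn hr q x y s hsmem.2⟩
  -- each probe misses the corrupted set for most seeds
  have hBad : ∀ k : Fin (2 * r),
      (Finset.univ.filter (fun s : Fin (2 ^ m) => k.val / 2 < L.length ∧
        y (P k s) ≠ SubstrHad.encF m hmn x (P k s))).card ≤ D.card := by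
    intro k
    by_cases hk : k.val / 2 < L.length
    · apply Finset.card_le_card_of_injOn (fun s => P k s)
      · intro s hsmem
        rw [Finset.mem_coe, Finset.mem_filter] at hsmem ⊢
        exact ⟨Finset.mem_univ _, hsmem.2.2⟩
      · intro s1 h1 s2 h2 heq
        have heq' : P k s1 = P k s2 := heq
        have e : ∀ s : Fin (2 ^ m), P k s = SubstrHad.qpos m hm0 hmn
            (L.get ⟨k.val / 2, hk⟩) (decide (k.val % 2 = 1)) ((SubstrHad.bv m).symm s) :=
          fun s => SubstrHad.probeF_eq m hm0 hmn hr q s k _ hk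
        rw [e, e] at heq'
        exact (SubstrHad.bv m).symm.injective (SubstrHad.qpos_inj m hm0 hmn _ _ heq')
    · have hempty : (Finset.univ.filter (fun s : Fin (2 ^ m) => k.val / 2 < L.length ∧
          y (P k s) ≠ SubstrHad.encF m hmn x (P k s))) = ∅ := by
        apply Finset.filter_false_of_mem
        intro s _ hcontra
        exact hk hcontra.1
      rw [hempty]
      simp
  -- counting bad seeds
  set B := Finset.univ.filter (fun s : Fin (2 ^ m) =>
    ∃ k : Fin (2 * r), k.val / 2 < L.length ∧
      y (P k s) ≠ SubstrHad.encF m hmn x (P k s)) with hBdef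
  have hBcard : B.card ≤ 2 * r * D.card := by
    have hsubB : B ⊆ Finset.univ.biUnion (fun k : Fin (2 * r) =>
        Finset.univ.filter (fun s : Fin (2 ^ m) => k.val / 2 < L.length ∧
          y (P k s) ≠ SubstrHad.encF m hmn x (P k s))) := by
      intro s hsmem
      rw [hBdef, Finset.mem_filter] at hsmem
      obtain ⟨_, k, hk1, hk2⟩ := hsmem
      exact Finset.mem_biUnion.mpr ⟨k, Finset.mem_univ _, by
        rw [Finset.mem_filter]; exact ⟨Finset.mem_univ _, hk1, hk2⟩⟩
    calc B.card ≤ _ := Finset.card_le_card hsubB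
      _ ≤ ∑ k : Fin (2 * r), (Finset.univ.filter (fun s : Fin (2 ^ m) =>
            k.val / 2 < L.length ∧
            y (P k s) ≠ SubstrHad.encF m hmn x (P k s))).card :=
        Finset.card_biUnion_le
      _ ≤ ∑ _k : Fin (2 * r), D.card := Finset.sum_le_sum (fun k _ => hBad k)
      _ = 2 * r * D.card := by simp [Finset.sum_const, mul_comm]
  have hGB : B.card + G.card = 2 ^ m := by
    have hGeq : G = Finset.univ.filter (fun s : Fin (2 ^ m) =>
        ¬ (∃ k : Fin (2 * r), k.val / 2 < L.length ∧
          y (P k s) ≠ SubstrHad.encF m hmn x (P k s))) := by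
      apply Finset.filter_congr
      intro s _
      constructor
      · intro h hex
        obtain ⟨k, hk, hne⟩ := hex
        exact hne (h k hk)
      · intro h k hk
        by_contra hne
        exact h ⟨k, hk, hne⟩
    rw [hGeq, hBdef]
    rw [Finset.card_filter_add_card_filter_not]
    simp
  -- put everything together
  have hfinal : (G.card : ℝ) ≤
      ((Finset.univ.filter (fun s : Fin (2 ^ m) =>
        SubstrHad.outF q s (runAns (SubstrHad.probeF m hm0 hmn hr) y q s)
          = substring' x q.val)).card : ℝ) :=
    Nat.cast_le.mpr (Finset.card_le_card hsub)
  have hDle : (D.card : ℝ) ≤ δ * ((r : ℝ) * (2 : ℝ) ^ m) := by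
    rw [hDcard]
    calc (hammingDist y (SubstrHad.encF m hmn x) : ℝ)
        ≤ δ * ((r * 2 ^ m : ℕ) : ℝ) := hy
      _ = δ * ((r : ℝ) * (2 : ℝ) ^ m) := by push_cast; ring
  have hBcard' : (B.card : ℝ) ≤ 2 * (r : ℝ) * D.card := by
    calc (B.card : ℝ) ≤ ((2 * r * D.card : ℕ) : ℝ) := Nat.cast_le.mpr hBcard
      _ = 2 * (r : ℝ) * D.card := by push_cast; ring
  have hGB' : (B.card : ℝ) + G.card = (2 : ℝ) ^ m := by
    calc (B.card : ℝ) + G.card = ((B.card + G.card : ℕ) : ℝ) := by push_cast; ring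
      _ = ((2 ^ m : ℕ) : ℝ) := by rw [hGB]
      _ = (2 : ℝ) ^ m := by push_cast; ring
  have hr' : (0 : ℝ) ≤ 2 * (r : ℝ) := by positivity
  have hmul := mul_le_mul_of_nonneg_left hDle hr'
  have hcast : ((2 ^ m : ℕ) : ℝ) = (2 : ℝ) ^ m := by push_cast; ring
  rw [hcast]
  nlinarith [hfinal, hBcard', hGB', hmul]
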